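/- For all r ∈ (0,1), ∫_0^π sin¹²ϑ / (1 - 2r cos ϑ + r²)^7 dϑ ≤ 231π/(1024(1-r²)). -/

import Mathlib

open Real MeasureTheory

set_option maxHeartbeats 2000000

noncomputable def P18 (r c : ℝ) : ℝ :=
  ((-3465:ℝ) + (-23100:ℝ)*r^2 + (-68838:ℝ)*r^4 + (-124476:ℝ)*r^6 + (-161161:ℝ)*r^8 + (-173056:ℝ)*r^10 + (-161161:ℝ)*r^12 + (-124476:ℝ)*r^14 + (-68838:ℝ)*r^16 + (-23100:ℝ)*r^18 + (-3465:ℝ)*r^20) + ((38115:ℝ)*r + (214830:ℝ)*r^3 + (534996:ℝ)*r^5 + (813186:ℝ)*r^7 + (923241:ℝ)*r^9 + (923241:ℝ)*r^11 + (813186:ℝ)*r^13 + (534996:ℝ)*r^15 + (214830:ℝ)*r^17 + (38115:ℝ)*r^19)*c + ((-170940:ℝ)*r^2 + (-786324:ℝ)*r^4 + (-1579908:ℝ)*r^6 + (-1989548:ℝ)*r^8 + (-2040128:ℝ)*r^10 + (-1989548:ℝ)*r^12 + (-1579908:ℝ)*r^14 + (-786324:ℝ)*r^16 + (-170940:ℝ)*r^18)*c^2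 + ((395010:ℝ)*r^3 + (1404018:ℝ)*r^5 + (2170278:ℝ)*r^7 + (2286438:ℝ)*r^9 + (2286438:ℝ)*r^11 + (2170278:ℝ)*r^13 + (1404018:ℝ)*r^15 + (395010:ℝ)*r^17)*c^3 + ((-482328:ℝ)*r^4 + (-1202256:ℝ)*r^6 + (-1354056:ℝ)*r^8 + (-1310976:ℝ)*r^10 + (-1354056:ℝ)*r^12 + (-1202256:ℝ)*r^14 + (-482328:ℝ)*r^16)*c^4 + ((271656:ℝ)*r^5 + (378576:ℝ)*r^7 + (330264:ℝ)*r^9 + (330264:ℝ)*r^11 + (378576:ℝ)*r^13 + (271656:ℝ)*r^15)*c^5 + ((-31680:ℝ)*r^6 + (-1760:ℝ)*r^8 + (-28736:ℝ)*r^10 + (-1760:ℝ)*r^12 + (-31680:ℝ)*r^14)*c^6 + ((-7920:ℝ)*r^7 + (6864:ℝ)*r^9 + (6864:ℝ)*r^11 + (-7920:ℝ)*r^13)*c^7 + ((-3520:ℝ)*r^8 + (6272:ℝ)*r^10 + (-3520:ℝ)*r^12)*c^8 + ((-2112:ℝ)*r^9 + (-2112:ℝ)*r^11)*c^9 + ((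-1536:ℝ)*r^10)*c^10

noncomputable def Pd18 (r c : ℝ) : ℝ :=
  ((38115:ℝ)*r + (214830:ℝ)*r^3 + (534996:ℝ)*r^5 + (813186:ℝ)*r^7 + (923241:ℝ)*r^9 + (923241:ℝ)*r^11 + (813186:ℝ)*r^13 + (534996:ℝ)*r^15 + (214830:ℝ)*r^17 + (38115:ℝ)*r^19) + 2*((-170940:ℝ)*r^2 + (-786324:ℝ)*r^4 + (-1579908:ℝ)*r^6 + (-1989548:ℝ)*r^8 + (-2040128:ℝ)*r^10 + (-1989548:ℝ)*r^12 + (-1579908:ℝ)*r^14 + (-786324:ℝ)*r^16 + (-170940:ℝ)*r^18)*c + 3*((395010:ℝ)*r^3 + (1404018:ℝ)*r^5 + (2170278:ℝ)*r^7 + (2286438:ℝ)*r^9 + (2286438:ℝ)*r^11 + (2170278:ℝ)*r^13 + (1404018:ℝ)*r^15 + (395010:ℝ)*r^17)*c^2 + 4*((-482328:ℝ)*r^4 + (-1202256:ℝ)*r^6 + (-1354056:ℝ)*r^8 + (-1310976:ℝ)*r^10 + (-1354056:ℝ)*r^12 + (-1202256:ℝ)*r^14 + (-482328:ℝ)*r^16)*c^3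 + 5*((271656:ℝ)*r^5 + (378576:ℝ)*r^7 + (330264:ℝ)*r^9 + (330264:ℝ)*r^11 + (378576:ℝ)*r^13 + (271656:ℝ)*r^15)*c^4 + 6*((-31680:ℝ)*r^6 + (-1760:ℝ)*r^8 + (-28736:ℝ)*r^10 + (-1760:ℝ)*r^12 + (-31680:ℝ)*r^14)*c^5 + 7*((-7920:ℝ)*r^7 + (6864:ℝ)*r^9 + (6864:ℝ)*r^11 + (-7920:ℝ)*r^13)*c^6 + 8*((-3520:ℝ)*r^8 + (6272:ℝ)*r^10 + (-3520:ℝ)*r^12)*c^7 + 9*((-2112:ℝ)*r^9 + (-2112:ℝ)*r^11)*c^8 + 10*((-1536:ℝ)*r^10)*c^9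

lemma hasDerivAt_P18 (r x : ℝ) :
    HasDerivAt (fun y => P18 r (Real.cos y)) (Pd18 r (Real.cos x) * (-Real.sin x)) x := by
  have hc := Real.hasDerivAt_cos x
  unfold P18 Pd18
  convert (((((((((((hasDerivAt_const x (((-3465:ℝ) + (-23100:ℝ)*r^2 + (-68838:ℝ)*r^4 + (-124476:ℝ)*r^6 + (-161161:ℝ)*r^8 + (-173056:ℝ)*r^10 + (-161161:ℝ)*r^12 + (-124476:ℝ)*r^14 + (-68838:ℝ)*r^16 + (-23100:ℝ)*r^18 + (-3465:ℝ)*r^20))).add (hc.const_mul (((38115:ℝ)*r + (214830:ℝ)*r^3 + (534996:ℝ)*r^5 + (813186:ℝ)*r^7 + (923241:ℝ)*r^9 + (923241:ℝ)*r^11 + (813186:ℝ)*r^13 + (534996:ℝ)*r^15 + (214830:ℝ)*r^17 + (38115:ℝ)*r^19)))).add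
    ((hc.pow 2).const_mul (((-170940:ℝ)*r^2 + (-786324:ℝ)*r^4 + (-1579908:ℝ)*r^6 + (-1989548:ℝ)*r^8 + (-2040128:ℝ)*r^10 + (-1989548:ℝ)*r^12 + (-1579908:ℝ)*r^14 + (-786324:ℝ)*r^16 + (-170940:ℝ)*r^18)))).add ((hc.pow 3).const_mul (((395010:ℝ)*r^3 + (1404018:ℝ)*r^5 + (2170278:ℝ)*r^7 + (2286438:ℝ)*r^9 + (2286438:ℝ)*r^11 + (2170278:ℝ)*r^13 + (1404018:ℝ)*r^15 + (395010:ℝ)*r^17)))).add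
    ((hc.pow 4).const_mul (((-482328:ℝ)*r^4 + (-1202256:ℝ)*r^6 + (-1354056:ℝ)*r^8 + (-1310976:ℝ)*r^10 + (-1354056:ℝ)*r^12 + (-1202256:ℝ)*r^14 + (-482328:ℝ)*r^16)))).add ((hc.pow 5).const_mul (((271656:ℝ)*r^5 + (378576:ℝ)*r^7 + (330264:ℝ)*r^9 + (330264:ℝ)*r^11 + (378576:ℝ)*r^13 + (271656:ℝ)*r^15)))).add
    ((hc.pow 6).const_mul (((-31680:ℝ)*r^6 + (-1760:ℝ)*r^8 + (-28736:ℝ)*r^10 + (-1760:ℝ)*r^12 + (-31680:ℝ)*r^14)))).add ((hc.pow 7).const_mul (((-7920:ℝ)*r^7 + (6864:ℝ)*r^9 + (6864:ℝ)*r^11 + (-7920:ℝ)*r^13)))).add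
    ((hc.pow 8).const_mul (((-3520:ℝ)*r^8 + (6272:ℝ)*r^10 + (-3520:ℝ)*r^12)))).add ((hc.pow 9).const_mul (((-2112:ℝ)*r^9 + (-2112:ℝ)*r^11)))).add
    ((hc.pow 10).const_mul (((-1536:ℝ)*r^10)))) using 1
  any_goals with_reducible_and_instances rfl
  push_cast
  ring

set_option maxRecDepth 100000

lemma key18bounds (r s c : ℝ) (h0 : 0 < r) (h1 : r < 1) (hsc : s^2 = 1 - c^2) :
    0 < 1 - 2*r*c + r^2 ∧ 0 < 1 - r*c := by
  have hc2 : c^2 ≤ 1 := by nlinarith [sq_nonneg s]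
  have hcle : c ≤ 1 := by nlinarith
  have hcge : -1 ≤ c := by nlinarith
  constructor <;> nlinarith

lemma key18id (r c : ℝ) :
    2*r*((c * P18 r c - (1 - c^2) * Pd18 r c)*(1 - 2*r*c + r^2) - 12*r*(1 - c^2)*P18 r c)
      = 30720*r^12*(1 - c^2)^6 - 3465*(1+r^12)*(1 - 2*r*c + r^2)^6
        + 3465*(1+r^2+r^4+r^6+r^8+r^10)*(1 - 2*r*c + r^2)^7 := by
  unfold P18 Pd18
  ring

lemma key18a (r s c : ℝ) (h0 : 0 < r) (h1 : r < 1) (hsc : s^2 = 1 - c^2) :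
    s^12/(1 - 2*r*c + r^2)^7 = (2*r*((c * P18 r c - s^2 * Pd18 r c)*(1 - 2*r*c + r^2) - 12*r*s^2*P18 r c)) / (30720*r^12*(1 - 2*r*c + r^2)^7) + (3465*(1+r^12)*(1 - 2*r*c + r^2)^6 - 3465*(1+r^2+r^4+r^6+r^8+r^10)*(1 - 2*r*c + r^2)^7) / (30720*r^12*(1 - 2*r*c + r^2)^7) := by
  obtain ⟨hdd, hw⟩ := key18bounds r s c h0 h1 hsc
  have h12 : s^12 = (1 - c^2)^6 := by rw [← hsc]; ring
  have hid := key18id r c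
  rw [← add_div, h12, hsc, hid]
  rw [div_eq_div_iff (pow_ne_zero 7 hdd.ne')
    (mul_ne_zero (mul_ne_zero (by norm_num) (pow_ne_zero 12 h0.ne')) (pow_ne_zero 7 hdd.ne'))]
  ring

lemma key18b1 (r s c : ℝ) (h0 : 0 < r) (hdd : 0 < 1 - 2*r*c + r^2) :
    ((2*r*((c * P18 r c - s^2 * Pd18 r c)*(1 - 2*r*c + r^2) - 12*r*s^2*P18 r c)) / (30720*r^12*(1 - 2*r*c + r^2)^7) : ℝ) = ((c * P18 r c + s * (Pd18 r c * -s)) * (15360*r^11*(1 - 2*r*c + r^2)^6) - s * P18 r c * (15360*r^11*(6*(1 - 2*r*c + r^2)^5*(2*r*s)))) / (15360*r^11*(1 - 2*r*c + r^2)^6)^2 := by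
  rw [div_eq_div_iff
    (mul_ne_zero (mul_ne_zero (by norm_num) (pow_ne_zero 12 h0.ne')) (pow_ne_zero 7 hdd.ne'))
    (pow_ne_zero 2 (mul_ne_zero (mul_ne_zero (by norm_num) (pow_ne_zero 11 h0.ne'))
      (pow_ne_zero 6 hdd.ne')))]
  ring

lemma key18b2 (r s c : ℝ) (h0 : 0 < r) (h1 : r < 1) (hsc : s^2 = 1 - c^2) :
    ((3465*(1+r^12)*(1 - 2*r*c + r^2)^6 - 3465*(1+r^2+r^4+r^6+r^8+r^10)*(1 - 2*r*c + r^2)^7) / (30720*r^12*(1 - 2*r*c + r^2)^7) : ℝ) = ((231*(1+r^12)/(2048*r^12*(1-r^2)))*(1 + 2*(1 / (1 + (r*s/(1 - r*c))^2) * ((r*c*(1 - r*c) - r*s*(r*s))/(1 - r*c)^2))) + (-(231*(1+r^2+r^4+r^6+r^8+r^10)/(2048*r^12)))*1) := by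
  obtain ⟨hdd, hw⟩ := key18bounds r s c h0 h1 hsc
  have hr2 : (0:ℝ) < 1 - r^2 := by nlinarith
  have hwne : ((1 - r*c)^2 : ℝ) ≠ 0 := pow_ne_zero 2 hw.ne'
  have e1 : (r*s/(1 - r*c))^2 = r^2*s^2/(1 - r*c)^2 := by rw [div_pow]; ring_nf
  have e2 : r*c*(1 - r*c) - r*s*(r*s) = r*c*(1 - r*c) - r^2*s^2 := by ring
  have h1X : 1 + r^2*(1 - c^2)/(1 - r*c)^2 = (1 - 2*r*c + r^2)/(1 - r*c)^2 := by
    rw [eq_div_iff hwne, add_mul, div_mul_cancel₀ _ hwne]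
    ring
  have hY : 1 / (1 + (r*s/(1 - r*c))^2) * ((r*c*(1 - r*c) - r*s*(r*s))/(1 - r*c)^2)
      = (r*c - r^2)/(1 - 2*r*c + r^2) := by
    rw [e1, e2, hsc, h1X, one_div_div, div_mul_div_comm,
      show (1 - r*c)^2*(r*c*(1 - r*c) - r^2*(1 - c^2)) = (r*c - r^2)*(1 - r*c)^2 from by ring,
      mul_div_mul_right _ _ hwne]
  have hDne : (30720*r^12*(1 - 2*r*c + r^2)^7 : ℝ) ≠ 0 :=
    mul_ne_zero (mul_ne_zero (by norm_num) (pow_ne_zero 12 h0.ne')) (pow_ne_zero 7 hdd.ne')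
  rw [hY, mul_one]
  have h2 : (1:ℝ) + 2*((r*c - r^2)/(1 - 2*r*c + r^2)) = (1 - r^2)/(1 - 2*r*c + r^2) := by
    rw [eq_div_iff hdd.ne', add_mul, mul_assoc 2 ((r*c - r^2)/(1 - 2*r*c + r^2)) (1 - 2*r*c + r^2), div_mul_cancel₀ _ hdd.ne']
    ring
  rw [h2]
  have h3 : (231*(1+r^12)/(2048*r^12*(1-r^2))) * ((1 - r^2)/(1 - 2*r*c + r^2))
      = 3465*(1+r^12)*(1 - 2*r*c + r^2)^6/(30720*r^12*(1 - 2*r*c + r^2)^7) := by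
    rw [div_mul_div_comm, div_eq_div_iff
      (mul_ne_zero (mul_ne_zero (mul_ne_zero (by norm_num) (pow_ne_zero 12 h0.ne')) hr2.ne')
        hdd.ne') hDne]
    ring
  have h4 : ((-(231*(1+r^2+r^4+r^6+r^8+r^10)/(2048*r^12))) : ℝ) = (-(3465*(1+r^2+r^4+r^6+r^8+r^10)*(1 - 2*r*c + r^2)^7))/(30720*r^12*(1 - 2*r*c + r^2)^7) := by
    rw [← neg_div, div_eq_div_iff (mul_ne_zero (by norm_num) (pow_ne_zero 12 h0.ne')) hDne]
    ring
  rw [h3, h4, ← add_div]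
  congr 1
  all_goals ring

lemma key18 (r s c : ℝ) (h0 : 0 < r) (h1 : r < 1) (hsc : s^2 = 1 - c^2) :
    s^12/(1 - 2*r*c + r^2)^7 = ((c * P18 r c + s * (Pd18 r c * -s)) * (15360*r^11*(1 - 2*r*c + r^2)^6) - s * P18 r c * (15360*r^11*(6*(1 - 2*r*c + r^2)^5*(2*r*s)))) / (15360*r^11*(1 - 2*r*c + r^2)^6)^2 + ((231*(1+r^12)/(2048*r^12*(1-r^2)))*(1 + 2*(1 / (1 + (r*s/(1 - r*c))^2) * ((r*c*(1 - r*c) - r*s*(r*s))/(1 - r*c)^2))) + (-(231*(1+r^2+r^4+r^6+r^8+r^10)/(2048*r^12)))*1) := by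
  rw [key18a r s c h0 h1 hsc,
    key18b1 r s c h0 (key18bounds r s c h0 h1 hsc).1, key18b2 r s c h0 h1 hsc]

lemma hderH18 (r : ℝ) (h0 : 0 < r) (h1 : r < 1) (x : ℝ) : HasDerivAt (fun y =>
      Real.sin y * P18 r (Real.cos y) / (15360*r^11*(1 - 2*r*Real.cos y + r^2)^6) +
      ((231*(1+r^12)/(2048*r^12*(1-r^2)))*(y + 2*Real.arctan (r*Real.sin y/(1 - r*Real.cos y))) + (-(231*(1+r^2+r^4+r^6+r^8+r^10)/(2048*r^12)))*y))
      (Real.sin x ^ 12 / (1 - 2*r*Real.cos x + r^2)^7) x := by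
  have hddpos : (0:ℝ) < 1 - 2*r*Real.cos x + r^2 := by
    nlinarith [Real.neg_one_le_cos x, Real.cos_le_one x]
  have hwpos : (0:ℝ) < 1 - r*Real.cos x := by
    nlinarith [Real.neg_one_le_cos x, Real.cos_le_one x]
  have hc := Real.hasDerivAt_cos x
  have hs := Real.hasDerivAt_sin x
  have hP := hasDerivAt_P18 r x
  have hdd : HasDerivAt (fun y => 1 - 2*r*Real.cos y + r^2) (2*r*Real.sin x) x := by
    convert ((hc.const_mul (2*r)).const_sub 1).add_const (r^2) using 1
    any_goals with_reducible_and_instances rfl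
    all_goals ring
  have hden : HasDerivAt (fun y => 15360*r^11*(1 - 2*r*Real.cos y + r^2)^6)
      (15360*r^11*(6*(1 - 2*r*Real.cos x + r^2)^5*(2*r*Real.sin x))) x := by
    convert (hdd.pow 6).const_mul (15360*r^11) using 1
    any_goals with_reducible_and_instances rfl
    all_goals push_cast; ring
  have hKne : 15360*r^11*(1 - 2*r*Real.cos x + r^2)^6 ≠ 0 :=
    mul_ne_zero (mul_ne_zero (by norm_num) (pow_ne_zero 11 h0.ne')) (pow_ne_zero 6 hddpos.ne')
  have hfrac := (hs.mul hP).div hden hKne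
  have hw : HasDerivAt (fun y => 1 - r*Real.cos y) (r*Real.sin x) x := by
    convert (hc.const_mul r).const_sub 1 using 1
    any_goals with_reducible_and_instances rfl
    all_goals ring
  have hinner := (hs.const_mul r).div hw hwpos.ne'
  have harc := hinner.arctan
  have hlin := (((hasDerivAt_id' x).add (harc.const_mul 2)).const_mul (231*(1+r^12)/(2048*r^12*(1-r^2)))).add
    ((hasDerivAt_id' x).const_mul (-(231*(1+r^2+r^4+r^6+r^8+r^10)/(2048*r^12))))
  have htot := hfrac.add hlin
  convert htot using 1
  any_goals with_reducible_and_instances rfl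
  exact key18 r (Real.sin x) (Real.cos x) h0 h1 (Real.sin_sq x)

theorem stmt_18 (r : ℝ) (hr : r ∈ Set.Ioo (0:ℝ) 1) :
    (∫ ϑ in (0:ℝ)..Real.pi, Real.sin ϑ ^ 12 / (1 - 2 * r * Real.cos ϑ + r ^ 2) ^ 7)
      ≤ 231 * Real.pi / (1024 * (1 - r ^ 2)) := by
  obtain ⟨h0, h1⟩ := hr
  have hr2 : (0:ℝ) < 1 - r^2 := by nlinarith
  have hddpos : ∀ x:ℝ, 0 < 1 - 2*r*Real.cos x + r^2 := fun x => by
    nlinarith [Real.neg_one_le_cos x, Real.cos_le_one x]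
  have hcont : Continuous (fun x:ℝ => Real.sin x ^ 12 / (1 - 2*r*Real.cos x + r^2)^7) := by
    apply Continuous.div
    · exact Real.continuous_sin.pow 12
    · exact ((continuous_const.sub (continuous_const.mul Real.continuous_cos)).add
        continuous_const).pow 7
    · exact fun x => pow_ne_zero 7 (hddpos x).ne'
  have hFTC := intervalIntegral.integral_eq_sub_of_hasDerivAt (a := (0:ℝ)) (b := Real.pi)
    (fun x _ => hderH18 r h0 h1 x) (hcont.intervalIntegrable 0 Real.pi)
  have hgoal : (∫ ϑ in (0:ℝ)..Real.pi, Real.sin ϑ ^ 12 / (1 - 2 * r * Real.cos ϑ + r ^ 2) ^ 7)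
      = 231 * Real.pi / (1024 * (1 - r ^ 2)) := by
    rw [hFTC]
    simp only [Real.sin_pi, Real.cos_pi, Real.sin_zero, Real.cos_zero, mul_zero, zero_mul,
      zero_div, Real.arctan_zero, zero_add, add_zero, mul_one, sub_zero, zero_sub, neg_neg]
    field_simp
    ring
  rw [hgoal]
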